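/- Let X be a random variable with Var(X) ≥ c₁ > 0 and E[e^{|X|}] ≤ c₂ < ∞. Then there exists a constant c₃ > 0 depending only on c₁ and c₂, and a measurable set Ω' with P(Ω') ≥ c₃, such that for every ω ∈ Ω': |X(ω) − ln(E[e^X])| ≥ √c₁/4. -/

import Mathlib

open MeasureTheory ProbabilityTheory

set_option maxHeartbeats 2000000

/-- Anticoncentration away from the log-moment-generating value: if `Var(X) ≥ c₁ > 0`
and `E[e^{|X|}] ≤ c₂`, there is a set `Ω'` of probability at least `c₃ = c₃(c₁,c₂) > 0`
on which `|X - ln E[e^X]| ≥ √c₁/4`. -/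
theorem anticoncentration_from_log_mgf (c₁ c₂ : ℝ) (hc₁ : 0 < c₁) :
    ∃ c₃ : ℝ, 0 < c₃ ∧
      ∀ (Ω : Type) [MeasurableSpace Ω] (P : Measure Ω) [IsProbabilityMeasure P]
        (X : Ω → ℝ),
        Measurable X →
        Integrable X P →
        Integrable (fun ω => Real.exp |X ω|) P →
        Integrable (fun ω => Real.exp (X ω)) P →
        c₁ ≤ variance X P →
        (∫ ω, Real.exp |X ω| ∂P) ≤ c₂ →
        ∃ Ω' : Set Ω, MeasurableSet Ω' ∧ ENNReal.ofReal c₃ ≤ P Ω' ∧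
          ∀ ω ∈ Ω',
            Real.sqrt c₁ / 4 ≤ |X ω - Real.log (∫ x, Real.exp (X x) ∂P)| := by
  classical
  set c : ℝ := max c₂ 1 with hc_def
  have hc1 : (1:ℝ) ≤ c := le_max_right _ _
  have hc0 : (0:ℝ) < c := lt_of_lt_of_le one_pos hc1
  set E₀ : ℝ := Real.exp c * c with hE₀_def
  have hE₀ : 0 < E₀ := mul_pos (Real.exp_pos c) hc0
  set Rsq : ℝ := 1024 * E₀ / c₁ with hRsq_def
  have hRsq : 0 < Rsq := by positivity
  have hc2c : c₂ ≤ c := le_max_left _ _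
  clear_value c E₀ Rsq
  refine ⟨c₁ ^ 2 / (2048 * E₀), by positivity, ?_⟩
  intro Ω mΩ P hP X hXm hXint hXexpabs hXexp hVar hc₂
  have hInt_le_c : (∫ ω, Real.exp |X ω| ∂P) ≤ c := le_trans hc₂ hc2c
  set I := ∫ x, Real.exp (X x) ∂P with hI_def
  set m := Real.log I with hm_def
  -- Jensen: exp (E X) ≤ E exp X
  have hJ : Real.exp (∫ ω, X ω ∂P) ≤ I := by
    have h := convexOn_exp.map_integral_le Real.continuous_exp.continuousOn isClosed_univ
      (Filter.Eventually.of_forall fun x => Set.mem_univ _) hXint (by exact hXexp)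
    simpa using h
  have hI_pos : 0 < I := lt_of_lt_of_le (Real.exp_pos _) hJ
  have habsX_int : Integrable (fun ω => |X ω|) P := hXint.abs
  have habsX_le : (∫ ω, |X ω| ∂P) ≤ c := by
    refine le_trans (integral_mono habsX_int hXexpabs fun ω => ?_) hInt_le_c
    have := Real.add_one_le_exp |X ω|
    linarith
  have hm_ub : m ≤ c := by
    have hIle : I ≤ c := by
      refine le_trans (integral_mono hXexp hXexpabs fun ω => ?_) hInt_le_c
      exact Real.exp_le_exp.2 (le_abs_self _)
    have h1 : Real.log I ≤ Real.log c := (Real.log_le_log_iff hI_pos hc0).2 hIle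
    have h2 : Real.log c ≤ c - 1 := Real.log_le_sub_one_of_pos hc0
    rw [hm_def]; linarith
  have hm_lb : -c ≤ m := by
    have h1 : (∫ ω, X ω ∂P) ≤ m := (Real.le_log_iff_exp_le hI_pos).2 hJ
    have h2 : -(∫ ω, |X ω| ∂P) ≤ ∫ ω, X ω ∂P := by
      rw [← integral_neg]
      exact integral_mono habsX_int.neg hXint fun ω => neg_abs_le _
    linarith
  have hm_abs : |m| ≤ c := abs_le.2 ⟨by linarith, hm_ub⟩
  set Y : Ω → ℝ := fun ω => X ω - m with hY_def
  clear_value I m Y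
  have hYm : Measurable Y := by rw [hY_def]; exact hXm.sub measurable_const
  have hYexp_le : ∀ ω, Real.exp |Y ω| ≤ Real.exp c * Real.exp |X ω| := by
    intro ω
    rw [← Real.exp_add]
    apply Real.exp_le_exp.2
    have h := abs_sub (X ω) m
    simp only [hY_def]
    linarith
  have hYexp_int : Integrable (fun ω => Real.exp |Y ω|) P := by
    refine Integrable.mono' (hXexpabs.const_mul (Real.exp c))
      (hYm.abs.exp).aestronglyMeasurable ?_
    filter_upwards with ω
    rw [Real.norm_eq_abs, abs_of_nonneg (Real.exp_pos _).le]
    exact hYexp_le ω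
  have hYexp_bound : (∫ ω, Real.exp |Y ω| ∂P) ≤ E₀ := by
    have h1 : (∫ ω, Real.exp |Y ω| ∂P) ≤ ∫ ω, Real.exp c * Real.exp |X ω| ∂P :=
      integral_mono hYexp_int (hXexpabs.const_mul _) hYexp_le
    rw [integral_const_mul] at h1
    have h2 : Real.exp c * (∫ ω, Real.exp |X ω| ∂P) ≤ Real.exp c * c :=
      mul_le_mul_of_nonneg_left hInt_le_c (Real.exp_pos c).le
    rw [hE₀_def]; linarith
  -- elementary inequalities
  have hsq_exp : ∀ t : ℝ, 0 ≤ t → t ^ 2 ≤ 4 * Real.exp t := by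
    intro t ht
    have h1 : (t / 2) ^ 2 ≤ (Real.exp (t / 2)) ^ 2 := by
      apply pow_le_pow_left₀ (by positivity)
      have := Real.add_one_le_exp (t / 2); linarith
    have h2 : (Real.exp (t / 2)) ^ 2 = Real.exp t := by
      rw [← Real.exp_nat_mul]; congr 1; push_cast; ring
    nlinarith
  have hfour_exp : ∀ t : ℝ, 0 ≤ t → t ^ 4 ≤ 256 * Real.exp t := by
    intro t ht
    have h1 : (t / 4) ^ 4 ≤ (Real.exp (t / 4)) ^ 4 := by
      apply pow_le_pow_left₀ (by positivity)
      have := Real.add_one_le_exp (t / 4); linarith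
    have h2 : (Real.exp (t / 4)) ^ 4 = Real.exp t := by
      rw [← Real.exp_nat_mul]; congr 1; push_cast; ring
    nlinarith
  -- integrability of squares
  have hYsq_int : Integrable (fun ω => Y ω ^ 2) P := by
    refine Integrable.mono' (hYexp_int.const_mul 4)
      ((hYm.pow_const 2).aestronglyMeasurable) ?_
    filter_upwards with ω
    rw [Real.norm_eq_abs, abs_of_nonneg (sq_nonneg _)]
    calc Y ω ^ 2 = |Y ω| ^ 2 := (sq_abs _).symm
      _ ≤ 4 * Real.exp |Y ω| := hsq_exp _ (abs_nonneg _)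
  have hXsq_int : Integrable (fun ω => X ω ^ 2) P := by
    refine Integrable.mono' (hXexpabs.const_mul 4)
      ((hXm.pow_const 2).aestronglyMeasurable) ?_
    filter_upwards with ω
    rw [Real.norm_eq_abs, abs_of_nonneg (sq_nonneg _)]
    calc X ω ^ 2 = |X ω| ^ 2 := (sq_abs _).symm
      _ ≤ 4 * Real.exp |X ω| := hsq_exp _ (abs_nonneg _)
  have hX2 : MemLp X 2 P := (memLp_two_iff_integrable_sq hXm.aestronglyMeasurable).2 hXsq_int
  -- c₁ ≤ ∫ Y²
  have hvar : c₁ ≤ ∫ ω, Y ω ^ 2 ∂P := by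
    have hv := variance_eq_sub (μ := P) hX2
    simp only [Pi.pow_apply] at hv
    have hexpand : (∫ ω, Y ω ^ 2 ∂P)
        = (∫ ω, X ω ^ 2 ∂P) - 2 * m * (∫ ω, X ω ∂P) + m ^ 2 := by
      have heq : (fun ω => Y ω ^ 2)
          = fun ω => (X ω ^ 2 - (2 * m) * X ω) + m ^ 2 := by
        funext ω; simp only [hY_def]; ring
      have i1 : Integrable (fun ω => X ω ^ 2 - 2 * m * X ω) P :=
        hXsq_int.sub (hXint.const_mul (2 * m))
      have i2 : Integrable (fun ω => 2 * m * X ω) P := hXint.const_mul (2 * m)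
      rw [heq, integral_add i1 (integrable_const _), integral_sub hXsq_int i2,
        integral_const_mul, integral_const]
      simp only [probReal_univ, smul_eq_mul, one_mul]
    have hsq := sq_nonneg ((∫ ω, X ω ∂P) - m)
    nlinarith [hVar, hv.symm.le, hv.le]
  -- the set
  set S : Set Ω := {ω | Real.sqrt c₁ / 4 ≤ |Y ω|} with hS_def
  have hSmeas : MeasurableSet S := measurableSet_le measurable_const hYm.abs
  have hsplit : (∫ ω in S, Y ω ^ 2 ∂P) + (∫ ω in Sᶜ, Y ω ^ 2 ∂P) = ∫ ω, Y ω ^ 2 ∂P :=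
    integral_add_compl hSmeas hYsq_int
  have hPScompl_le : ((P Sᶜ).toReal : ℝ) ≤ 1 := by
    have h := prob_le_one (μ := P) (s := Sᶜ)
    simpa using ENNReal.toReal_mono ENNReal.one_ne_top h
  have hcomp : (∫ ω in Sᶜ, Y ω ^ 2 ∂P) ≤ c₁ / 16 := by
    have hle : ∀ ω ∈ Sᶜ, Y ω ^ 2 ≤ c₁ / 16 := by
      intro ω hω
      simp only [hS_def, Set.mem_compl_iff, Set.mem_setOf_eq, not_le] at hω
      have h1 : |Y ω| ^ 2 ≤ (Real.sqrt c₁ / 4) ^ 2 :=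
        pow_le_pow_left₀ (abs_nonneg _) hω.le 2
      have h2 : (Real.sqrt c₁) ^ 2 = c₁ := Real.sq_sqrt hc₁.le
      rw [sq_abs] at h1
      nlinarith
    calc (∫ ω in Sᶜ, Y ω ^ 2 ∂P) ≤ ∫ _ω in Sᶜ, (c₁ / 16) ∂P :=
          setIntegral_mono_on hYsq_int.integrableOn (integrableOn_const (measure_ne_top _ _))
            hSmeas.compl hle
      _ = (P Sᶜ).toReal * (c₁ / 16) := by rw [setIntegral_const]; simp [smul_eq_mul, Measure.real]
      _ ≤ c₁ / 16 := by nlinarith [ENNReal.toReal_nonneg (a := P Sᶜ)]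
  have hptw : ∀ ω, Y ω ^ 2 ≤ Rsq + (256 / Rsq) * Real.exp |Y ω| := by
    intro ω
    rcases le_or_gt (Y ω ^ 2) Rsq with h | h
    · have h0 : 0 ≤ (256 / Rsq) * Real.exp |Y ω| := by positivity
      exact h.trans (le_add_of_nonneg_right h0)
    · have h4 := hfour_exp |Y ω| (abs_nonneg _)
      have e1 : |Y ω| ^ 4 = (Y ω ^ 2) ^ 2 := by
        calc |Y ω| ^ 4 = (|Y ω| ^ 2) ^ 2 := by ring
          _ = (Y ω ^ 2) ^ 2 := by rw [sq_abs]
      rw [e1] at h4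
      have key : Y ω ^ 2 * Rsq ≤ Rsq * Rsq + 256 * Real.exp |Y ω| := by
        have k1 : Y ω ^ 2 * Rsq ≤ Y ω ^ 2 * Y ω ^ 2 :=
          mul_le_mul_of_nonneg_left h.le (sq_nonneg _)
        have k2 : Y ω ^ 2 * Y ω ^ 2 = (Y ω ^ 2) ^ 2 := by ring
        have k3 : (0:ℝ) ≤ Rsq * Rsq := by positivity
        linarith
      have : Y ω ^ 2 ≤ (Rsq * Rsq + 256 * Real.exp |Y ω|) / Rsq := by
        rw [le_div_iff₀ hRsq]; exact key
      calc Y ω ^ 2 ≤ (Rsq * Rsq + 256 * Real.exp |Y ω|) / Rsq := this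
        _ = Rsq + (256 / Rsq) * Real.exp |Y ω| := by field_simp
  have hmain : (∫ ω in S, Y ω ^ 2 ∂P) ≤ Rsq * (P S).toReal + 256 * E₀ / Rsq := by
    have hb : Integrable (fun ω => Rsq + (256 / Rsq) * Real.exp |Y ω|) P :=
      (integrable_const Rsq).add (hYexp_int.const_mul _)
    have h1 : (∫ ω in S, Y ω ^ 2 ∂P) ≤ ∫ ω in S, (Rsq + (256 / Rsq) * Real.exp |Y ω|) ∂P :=
      setIntegral_mono_on hYsq_int.integrableOn hb.integrableOn hSmeas fun ω _ => hptw ω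
    have h2 : (∫ ω in S, (Rsq + (256 / Rsq) * Real.exp |Y ω|) ∂P)
        = Rsq * (P S).toReal + (256 / Rsq) * ∫ ω in S, Real.exp |Y ω| ∂P := by
      have i1 : Integrable (fun _ : Ω => Rsq) (P.restrict S) := integrable_const _
      have i2 : Integrable (fun ω => (256 / Rsq) * Real.exp |Y ω|) (P.restrict S) :=
        (hYexp_int.const_mul _).restrict
      rw [integral_add i1 i2, setIntegral_const, integral_const_mul]
      simp [smul_eq_mul, mul_comm, Measure.real]
    have h3 : (∫ ω in S, Real.exp |Y ω| ∂P) ≤ E₀ := by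
      refine le_trans (setIntegral_le_integral hYexp_int ?_) hYexp_bound
      filter_upwards with ω using (Real.exp_pos _).le
    have h4 : (256 / Rsq) * (∫ ω in S, Real.exp |Y ω| ∂P) ≤ (256 / Rsq) * E₀ :=
      mul_le_mul_of_nonneg_left h3 (by positivity)
    have h5 : (256 / Rsq) * E₀ = 256 * E₀ / Rsq := by ring
    linarith
  -- combine
  have h256 : 256 * E₀ / Rsq = c₁ / 4 := by
    rw [hRsq_def]; field_simp; ring
  have h3 : 11 * c₁ / 16 ≤ Rsq * (P S).toReal := by
    rw [h256] at hmain
    rw [← hsplit] at hvar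
    linarith [hcomp, hmain, hvar]
  have hp : c₁ ^ 2 / (2048 * E₀) ≤ (P S).toReal := by
    have h4 : 11 * c₁ / (16 * Rsq) ≤ (P S).toReal := by
      rw [div_le_iff₀ (by positivity)]
      calc 11 * c₁ = (11 * c₁ / 16) * 16 := by ring
        _ ≤ Rsq * (P S).toReal * 16 := by linarith
        _ = (P S).toReal * (16 * Rsq) := by ring
    refine le_trans ?_ h4
    have heq2 : 11 * c₁ / (16 * Rsq) = 11 * c₁ ^ 2 / (16384 * E₀) := by
      rw [hRsq_def]; field_simp; ring
    rw [heq2, div_le_div_iff₀ (by positivity) (by positivity)]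
    nlinarith [mul_nonneg (sq_nonneg c₁) hE₀.le]
  refine ⟨S, hSmeas, ?_, ?_⟩
  · rw [ENNReal.ofReal_le_iff_le_toReal (measure_ne_top P S)]
    exact hp
  · intro ω hω
    simpa [hS_def, hY_def, hm_def, hI_def] using hω
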